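/- arXiv:2112.06983 — 3 statements merged into one kernel-verified Lean document; each statement's English description precedes it below -/
import Mathlib

section
/- Let m ≥ 1 be a natural number. In the formal power series ring in two variables a and t over ℚ, let F be the power series whose coefficient of a^n t^s equals P_m^n(s) for all n, s ∈ ℕ. Then F · ∏_{i=0}^{m} (1 − a·t^i) = 1; equivalently, ∏_{i=0}^{m} 1/(1 − a t^i) = Σ_{n=0}^∞ Σ_{s=0}^{mn} P_m^n(s) a^n t^s. -/
open Finset

/-- `W t d` : the number of tuples `x` of nonnegative integers with `∑ i, d i * x i = t`. -/
noncomputable def W (t : ℤ) (d : List ℕ) : ℕ :=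
  Nat.card {x : Fin d.length → ℕ // ∑ i, (d.get i : ℤ) * (x i : ℤ) = t}

/-- `Wm j t` : the restricted partition function `W(t, (1,2,…,j))`. -/
noncomputable def Wm (j : ℕ) (t : ℤ) : ℕ :=
  W t ((List.range j).map (· + 1))

/-- `P m n s` : the Gaussian polynomial coefficient, i.e. the number of tuples
`(x_1,…,x_m)` of nonnegative integers with `∑ i, i * x_i = s` and `∑ i, x_i ≤ n`. -/
noncomputable def P (m n s : ℕ) : ℕ :=
  Nat.card {x : Fin m → ℕ // (∑ i : Fin m, ((i : ℕ) + 1) * x i = s) ∧ ∑ i, x i ≤ n}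

/-- `tri j = j(j+1)/2`, the `j`-th triangular number. -/
def tri (j : ℕ) : ℕ := j * (j + 1) / 2

/-! ### Auxiliary combinatorics -/

def Sol (m n s : ℕ) :=
  {x : Fin m → ℕ // (∑ i : Fin m, ((i : ℕ) + 1) * x i = s) ∧ ∑ i, x i ≤ n}

lemma P_eq_card (m n s : ℕ) : P m n s = Nat.card (Sol m n s) := rfl

instance finiteSol (m n s : ℕ) : Finite (Sol m n s) := by
  apply Finite.of_injective (β := Fin m → Fin (s + 1))
    (f := fun x i => ⟨x.1 i, by
      have h1 := Finset.single_le_sum (f := fun j : Fin m => ((j : ℕ) + 1) * x.1 j)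
        (fun j _ => Nat.zero_le _) (Finset.mem_univ i)
      rw [x.2.1] at h1
      replace h1 : ((i : ℕ) + 1) * x.1 i ≤ s := h1
      have h2 : x.1 i ≤ ((i : ℕ) + 1) * x.1 i := Nat.le_mul_of_pos_left _ (Nat.succ_pos _)
      omega⟩)
  intro x y h
  apply Subtype.ext
  funext i
  exact congrArg Fin.val (congrFun h i)

lemma P_zero (n s : ℕ) : P 0 n s = if s = 0 then 1 else 0 := by
  unfold P
  split
  · rename_i h
    subst h
    rw [Nat.card_eq_one_iff_unique]
    constructor
    · constructor
      rintro ⟨x, _⟩ ⟨y, _⟩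
      ext i
      exact i.elim0
    · exact ⟨⟨Fin.elim0, by simp⟩⟩
  · rename_i h
    rw [Nat.card_eq_zero]
    left
    constructor
    rintro ⟨x, hx, -⟩
    simp at hx
    omega

lemma wsum_decomp (m : ℕ) (x : Fin (m + 1) → ℕ) :
    ∑ i : Fin (m + 1), ((i : ℕ) + 1) * x i
      = (∑ i : Fin m, ((i : ℕ) + 1) * x i.castSucc) + (m + 1) * x (Fin.last m) := by
  rw [Fin.sum_univ_castSucc]; simp

lemma sum_decomp (m : ℕ) (x : Fin (m + 1) → ℕ) :
    ∑ i : Fin (m + 1), x i = (∑ i : Fin m, x i.castSucc) + x (Fin.last m) := by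
  rw [Fin.sum_univ_castSucc]

lemma update_wsum (m : ℕ) (x : Fin (m + 1) → ℕ) (v : ℕ) :
    ∑ i : Fin (m + 1), ((i : ℕ) + 1) * (Function.update x (Fin.last m) v) i
      = (∑ i : Fin m, ((i : ℕ) + 1) * x i.castSucc) + (m + 1) * v := by
  rw [wsum_decomp]
  simp only [Function.update_self]
  congr 1
  exact Finset.sum_congr rfl fun i _ => by
    rw [Function.update_of_ne (Fin.castSucc_lt_last i).ne]

lemma update_sum (m : ℕ) (x : Fin (m + 1) → ℕ) (v : ℕ) :
    ∑ i : Fin (m + 1), (Function.update x (Fin.last m) v) i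
      = (∑ i : Fin m, x i.castSucc) + v := by
  rw [sum_decomp]
  simp only [Function.update_self]
  congr 1
  exact Finset.sum_congr rfl fun i _ => by
    rw [Function.update_of_ne (Fin.castSucc_lt_last i).ne]

lemma hmul (m : ℕ) : ∀ b : ℕ, 1 ≤ b → (m + 1) * b = (m + 1) * (b - 1) + (m + 1) := by
  intro b hb
  cases b with
  | zero => omega
  | succ k => rw [Nat.add_sub_cancel]; ring

def E0 (m n s : ℕ) : {z : Sol (m + 1) n s // z.1 (Fin.last m) = 0} ≃ Sol m n s where
  toFun z := ⟨fun i => z.1.1 i.castSucc, by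
    have hw := wsum_decomp m z.1.1
    have hb := sum_decomp m z.1.1
    have h1 := z.1.2.1
    have h2 := z.1.2.2
    rw [z.2] at hw hb
    constructor
    · show ∑ i : Fin m, ((i : ℕ) + 1) * z.1.1 i.castSucc = s
      omega
    · show ∑ i : Fin m, z.1.1 i.castSucc ≤ n
      omega⟩
  invFun y := ⟨⟨Fin.snoc y.1 0, by
      have hw := wsum_decomp m (Fin.snoc y.1 0 : Fin (m + 1) → ℕ)
      have hb := sum_decomp m (Fin.snoc y.1 0 : Fin (m + 1) → ℕ)
      simp only [Fin.snoc_castSucc, Fin.snoc_last] at hw hb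
      have h1 := y.2.1
      have h2 := y.2.2
      constructor
      · omega
      · omega⟩, by simp⟩
  left_inv z := by
    apply Subtype.ext; apply Subtype.ext
    funext i
    rcases Fin.eq_castSucc_or_eq_last i with ⟨j, rfl⟩ | rfl
    · simp
    · simp [z.2]
  right_inv y := by
    apply Subtype.ext
    funext i
    simp

def E1 (m n s : ℕ) (hn : 1 ≤ n) (hs : m + 1 ≤ s) :
    {z : Sol (m + 1) n s // z.1 (Fin.last m) ≠ 0} ≃ Sol (m + 1) (n - 1) (s - (m + 1)) where
  toFun z := ⟨Function.update z.1.1 (Fin.last m) (z.1.1 (Fin.last m) - 1), by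
    have hw := wsum_decomp m z.1.1
    have hb := sum_decomp m z.1.1
    have h1 := z.1.2.1
    have h2 := z.1.2.2
    have hl : 1 ≤ z.1.1 (Fin.last m) := Nat.one_le_iff_ne_zero.2 z.2
    have hm := hmul m _ hl
    rw [update_wsum, update_sum]
    constructor
    · omega
    · omega⟩
  invFun y := ⟨⟨Function.update y.1 (Fin.last m) (y.1 (Fin.last m) + 1), by
      have hw := wsum_decomp m y.1
      have hb := sum_decomp m y.1
      have h1 := y.2.1
      have h2 := y.2.2
      have hm : (m + 1) * (y.1 (Fin.last m) + 1) = (m + 1) * y.1 (Fin.last m) + (m + 1) := by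
        ring
      rw [update_wsum, update_sum]
      constructor
      · omega
      · omega⟩, by simp⟩
  left_inv z := by
    apply Subtype.ext; apply Subtype.ext
    have hl : 1 ≤ z.1.1 (Fin.last m) := Nat.one_le_iff_ne_zero.2 z.2
    simp only [Function.update_idem, Function.update_self]
    rw [Nat.sub_add_cancel hl, Function.update_eq_self]
  right_inv y := by
    apply Subtype.ext
    simp only [Function.update_idem, Function.update_self, Nat.add_sub_cancel]
    rw [Function.update_eq_self]

lemma empty1 (m n s : ℕ) (h : ¬(1 ≤ n ∧ m + 1 ≤ s)) :
    IsEmpty {z : Sol (m + 1) n s // z.1 (Fin.last m) ≠ 0} := by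
  constructor
  rintro ⟨⟨x, h1, h2⟩, hz⟩
  have hw := wsum_decomp m x
  have hb := sum_decomp m x
  have hl : 1 ≤ x (Fin.last m) := Nat.one_le_iff_ne_zero.2 hz
  have hle : m + 1 ≤ (m + 1) * x (Fin.last m) := Nat.le_mul_of_pos_right _ hl
  omega

lemma P_succ (m n s : ℕ) :
    P (m + 1) n s
      = P m n s + if 1 ≤ n ∧ m + 1 ≤ s then P (m + 1) (n - 1) (s - (m + 1)) else 0 := by
  have hsplit : Nat.card (Sol (m + 1) n s)
      = Nat.card {z : Sol (m + 1) n s // z.1 (Fin.last m) = 0}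
        + Nat.card {z : Sol (m + 1) n s // z.1 (Fin.last m) ≠ 0} := by
    rw [← Nat.card_sum]
    exact Nat.card_congr (Equiv.sumCompl (fun z : Sol (m + 1) n s =>
      z.1 (Fin.last m) = 0)).symm
  rw [P_eq_card, hsplit, Nat.card_congr (E0 m n s)]
  congr 1
  split
  · rename_i h
    rw [Nat.card_congr (E1 m n s h.1 h.2)]
    rfl
  · rename_i h
    have := empty1 m n s h
    simp [Nat.card_of_isEmpty]

/-! ### Auxiliary power series facts -/

lemma finsupp_repr (e : Fin 2 →₀ ℕ) :
    e = Finsupp.single 0 (e 0) + Finsupp.single 1 (e 1) := by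
  ext i
  fin_cases i <;> simp [Finsupp.single_apply]

lemma le_iff' (n s a b : ℕ) :
    (Finsupp.single 0 a + Finsupp.single 1 b : Fin 2 →₀ ℕ)
      ≤ Finsupp.single 0 n + Finsupp.single 1 s ↔ a ≤ n ∧ b ≤ s := by
  rw [Finsupp.le_def]
  constructor
  · intro h
    exact ⟨by simpa [Finsupp.single_apply] using h 0,
      by simpa [Finsupp.single_apply] using h 1⟩
  · intro h i
    fin_cases i <;> simp [Finsupp.single_apply, h.1, h.2]

lemma sub_eq' (n s a b : ℕ) :
    (Finsupp.single 0 n + Finsupp.single 1 s : Fin 2 →₀ ℕ)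
        - (Finsupp.single 0 a + Finsupp.single 1 b)
      = Finsupp.single 0 (n - a) + Finsupp.single 1 (s - b) := by
  ext i
  fin_cases i <;> simp [Finsupp.tsub_apply, Finsupp.single_apply]

lemma eq_zero_iff' (n s : ℕ) :
    (Finsupp.single 0 n + Finsupp.single 1 s : Fin 2 →₀ ℕ) = 0 ↔ n = 0 ∧ s = 0 := by
  constructor
  · intro h
    constructor
    · have := congrFun (congrArg (↑· : (Fin 2 →₀ ℕ) → Fin 2 → ℕ) h) 0
      simpa [Finsupp.single_apply] using this
    · have := congrFun (congrArg (↑· : (Fin 2 →₀ ℕ) → Fin 2 → ℕ) h) 1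
      simpa [Finsupp.single_apply] using this
  · rintro ⟨rfl, rfl⟩
    simp

lemma factor_eq_monomial (k : ℕ) :
    (MvPowerSeries.X (0 : Fin 2) * MvPowerSeries.X (1 : Fin 2) ^ k : MvPowerSeries (Fin 2) ℚ)
      = MvPowerSeries.monomial (Finsupp.single 0 1 + Finsupp.single 1 k) 1 := by
  rw [MvPowerSeries.X_pow_eq, MvPowerSeries.X, MvPowerSeries.monomial_mul_monomial, one_mul]

lemma coeff_sub_factor (k : ℕ) (F : MvPowerSeries (Fin 2) ℚ) (e : Fin 2 →₀ ℕ) :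
    MvPowerSeries.coeff e (F * (1 - MvPowerSeries.X (0 : Fin 2)
        * MvPowerSeries.X (1 : Fin 2) ^ k))
      = MvPowerSeries.coeff e F
        - (if (Finsupp.single 0 1 + Finsupp.single 1 k) ≤ e
            then MvPowerSeries.coeff (e - (Finsupp.single 0 1 + Finsupp.single 1 k)) F
            else 0) := by
  rw [mul_sub, mul_one, map_sub, factor_eq_monomial, MvPowerSeries.coeff_mul_monomial]
  simp only [mul_one]

lemma key_induction (m : ℕ) : ∀ F : MvPowerSeries (Fin 2) ℚ,
    (∀ n s : ℕ,
      MvPowerSeries.coeff (Finsupp.single 0 n + Finsupp.single 1 s) F = (P m n s : ℚ)) →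
    F * ∏ i ∈ Finset.range (m + 1),
      (1 - MvPowerSeries.X (0 : Fin 2) * (MvPowerSeries.X (1 : Fin 2)) ^ i) = 1 := by
  induction m with
  | zero =>
    intro F hF
    rw [Finset.prod_range_one]
    apply MvPowerSeries.ext
    intro e
    rw [finsupp_repr e]
    set n := e 0
    set s := e 1
    rw [coeff_sub_factor 0 F]
    simp only [le_iff', sub_eq', hF, MvPowerSeries.coeff_one, eq_zero_iff']
    by_cases hs : s = 0 <;> by_cases hn : n = 0 <;>
      simp [P_zero, hs, hn] <;> split_ifs <;> simp_all
  | succ m ih =>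
    intro F hF
    have hG : ∀ n s : ℕ,
        MvPowerSeries.coeff (Finsupp.single 0 n + Finsupp.single 1 s)
          (F * (1 - MvPowerSeries.X (0 : Fin 2)
            * MvPowerSeries.X (1 : Fin 2) ^ (m + 1))) = (P m n s : ℚ) := by
      intro n s
      rw [coeff_sub_factor]
      simp only [le_iff', sub_eq', hF]
      rw [P_succ m n s]
      push_cast
      split_ifs <;> simp_all
    calc F * ∏ i ∈ Finset.range (m + 1 + 1),
          (1 - MvPowerSeries.X (0 : Fin 2) * (MvPowerSeries.X (1 : Fin 2)) ^ i)
        = (F * (1 - MvPowerSeries.X (0 : Fin 2) * MvPowerSeries.X (1 : Fin 2) ^ (m + 1)))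
            * ∏ i ∈ Finset.range (m + 1),
              (1 - MvPowerSeries.X (0 : Fin 2) * (MvPowerSeries.X (1 : Fin 2)) ^ i) := by
          rw [Finset.prod_range_succ]; ring
      _ = 1 := ih _ hG

/-- the generating function identity
`∏_{i=0}^{m} 1/(1 − a t^i) = Σ_n Σ_s P_m^n(s) a^n t^s` in `MvPowerSeries (Fin 2) ℚ`,
where `X 0 = a` and `X 1 = t`. -/
theorem gaussian_generating_function (m : ℕ) (hm : 1 ≤ m)
    (F : MvPowerSeries (Fin 2) ℚ)
    (hF : ∀ n s : ℕ,
      MvPowerSeries.coeff (Finsupp.single 0 n + Finsupp.single 1 s) F = (P m n s : ℚ)) :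
    F * ∏ i ∈ Finset.range (m + 1),
      (1 - MvPowerSeries.X (0 : Fin 2) * (MvPowerSeries.X (1 : Fin 2)) ^ i) = 1 :=
  key_induction m F hF
end

section
/- Let m, n ≥ 1 and let 1 ≤ r ≤ m. For every natural number s in the r-th chamber, i.e. (r−1)n ≤ s ≤ rn, the Gaussian polynomial coefficient is given by: P_m^n(s) = W_m(s) + Σ_{i=1}^{r−1} (−1)^{i} Σ_{k=0}^{s − i n − s_i} W_{m−i}(k) · W_i(s − n i − s_i − k), where any inner sum whose upper limit is negative is empty (equals 0). -/
open Finset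

-- solution sets
def sol (j : ℕ) (t : ℤ) : Type :=
  {x : Fin j → ℕ // ∑ i : Fin j, ((i : ℕ) + 1 : ℤ) * (x i : ℤ) = t}

def solAux (j : ℕ) (t : ℤ) : Type :=
  {q : ℕ × (Fin j → ℕ) // (∑ i : Fin j, ((i : ℕ) + 1 : ℤ) * (q.2 i : ℤ)) + ((j : ℤ) + 1) * (q.1 : ℤ) = t}

def snocEquiv (m : ℕ) : (Fin (m + 1) → ℕ) ≃ ℕ × (Fin m → ℕ) where
  toFun x := (x (Fin.last m), x ∘ Fin.castSucc)
  invFun q := Fin.snoc q.2 q.1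
  left_inv x := Fin.snoc_init_self x
  right_inv q := by
    refine Prod.ext ?_ ?_
    · simp [Fin.snoc_last]
    · funext i; simp [Fin.snoc_castSucc]

lemma sum_w_snoc (m : ℕ) (x : Fin (m + 1) → ℕ) :
    (∑ i : Fin (m + 1), ((i : ℕ) + 1 : ℤ) * (x i : ℤ)) =
      (∑ i : Fin m, ((i : ℕ) + 1 : ℤ) * (x i.castSucc : ℤ)) + ((m : ℤ) + 1) * (x (Fin.last m) : ℤ) := by
  rw [Fin.sum_univ_castSucc]
  simp

lemma sum_snoc (m : ℕ) (x : Fin (m + 1) → ℕ) :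
    (∑ i : Fin (m + 1), x i) = (∑ i : Fin m, x i.castSucc) + x (Fin.last m) :=
  Fin.sum_univ_castSucc x

def solEquiv (j : ℕ) (t : ℤ) : sol (j + 1) t ≃ solAux j t :=
  (snocEquiv j).subtypeEquiv fun x => by
    rw [sum_w_snoc]
    exact Iff.rfl

-- finiteness
lemma sol_finite (j : ℕ) (t : ℤ) : Finite (sol j t) := by
  refine Finite.of_injective (fun x : sol j t => (fun i => (⟨x.1 i, ?_⟩ : Fin (t.toNat + 1)))) ?_
  · have hx := x.2
    have h1 : ((x.1 i : ℤ)) ≤ t := by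
      calc (x.1 i : ℤ) ≤ ((i : ℕ) + 1 : ℤ) * (x.1 i : ℤ) := by
            nlinarith [Int.natCast_nonneg (x.1 i), Int.natCast_nonneg (i : ℕ)]
      _ ≤ ∑ i' : Fin j, ((i' : ℕ) + 1 : ℤ) * (x.1 i' : ℤ) := by
          refine Finset.single_le_sum (f := fun i' : Fin j => ((i' : ℕ) + 1 : ℤ) * (x.1 i' : ℤ)) ?_ (Finset.mem_univ i)
          intro i' _
          positivity
      _ = t := hx
    omega
  · intro a b hab
    apply Subtype.ext
    funext i
    have := congrFun hab i
    simpa [Fin.val_eq_val, Fin.ext_iff] using congrArg Fin.val this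

instance (j : ℕ) (t : ℤ) : Finite (sol j t) := sol_finite j t
instance (j : ℕ) (t : ℤ) : Finite (solAux j t) := Finite.of_equiv _ (solEquiv j t)

-- split equiv
def natSplitEquiv {α : Type} (Q : ℕ → α → Prop) :
    {p : ℕ × α // Q p.1 p.2} ≃ {a : α // Q 0 a} ⊕ {p : ℕ × α // Q (p.1 + 1) p.2} where
  toFun p := match p with
    | ⟨(0, a), h⟩ => .inl ⟨a, h⟩
    | ⟨(c+1, a), h⟩ => .inr ⟨(c, a), h⟩
  invFun := Sum.elim (fun a => ⟨(0, a.1), a.2⟩) (fun p => ⟨(p.1.1 + 1, p.1.2), p.2⟩)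
  left_inv := by rintro ⟨⟨(_ | c), a⟩, h⟩ <;> rfl
  right_inv := by rintro (⟨a, h⟩ | ⟨⟨c, a⟩, h⟩) <;> rfl

lemma card_split {α : Type} (Q : ℕ → α → Prop) [Finite {p : ℕ × α // Q p.1 p.2}] :
    Nat.card {p : ℕ × α // Q p.1 p.2} =
      Nat.card {a : α // Q 0 a} + Nat.card {p : ℕ × α // Q (p.1 + 1) p.2} := by
  haveI hS : Finite ({a : α // Q 0 a} ⊕ {p : ℕ × α // Q (p.1 + 1) p.2}) :=
    Finite.of_equiv _ (natSplitEquiv Q)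
  haveI : Finite {a : α // Q 0 a} :=
    Finite.of_injective (Sum.inl : {a : α // Q 0 a} → {a : α // Q 0 a} ⊕ {p : ℕ × α // Q (p.1 + 1) p.2}) Sum.inl_injective
  haveI : Finite {p : ℕ × α // Q (p.1 + 1) p.2} :=
    Finite.of_injective (Sum.inr : {p : ℕ × α // Q (p.1 + 1) p.2} → {a : α // Q 0 a} ⊕ {p : ℕ × α // Q (p.1 + 1) p.2}) Sum.inr_injective
  rw [Nat.card_congr (natSplitEquiv Q), Nat.card_sum]


lemma Wm_card (j : ℕ) (t : ℤ) : Wm j t = Nat.card (sol j t) := by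
  unfold Wm W sol
  have hl : ((List.range j).map (· + 1)).length = j := by simp
  refine Nat.card_congr (Equiv.subtypeEquiv (Equiv.arrowCongr (finCongr hl) (Equiv.refl ℕ)) ?_)
  intro x
  rw [← Equiv.sum_comp (finCongr hl)]
  refine Eq.congr_left (Finset.sum_congr rfl ?_) -- sums equal iff
  intro i _
  have hget : ((((List.range j).map (· + 1)).get i : ℕ) : ℤ) = ((finCongr hl) i : ℕ) + 1 := by
    simp [List.get_eq_getElem]
  rw [hget]
  simp [Equiv.arrowCongr, finCongr]

noncomputable def wz (j : ℕ) (t : ℤ) : ℤ := (Wm j t : ℤ)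

lemma sol_isEmpty_of_neg (j : ℕ) (t : ℤ) (ht : t < 0) : IsEmpty (sol j t) := by
  constructor
  rintro ⟨x, hx⟩
  have : (0 : ℤ) ≤ ∑ i : Fin j, ((i : ℕ) + 1 : ℤ) * (x i : ℤ) := by positivity
  omega

lemma wz_neg (j : ℕ) (t : ℤ) (ht : t < 0) : wz j t = 0 := by
  unfold wz
  rw [Wm_card]
  haveI := sol_isEmpty_of_neg j t ht
  simp [Nat.card_of_isEmpty]

lemma wz_zero (t : ℤ) : wz 0 t = if t = 0 then 1 else 0 := by
  unfold wz
  rw [Wm_card]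
  by_cases h : t = 0
  · subst h
    haveI : Unique (sol 0 0) := by
      refine ⟨⟨⟨fun i => 0, by simp⟩⟩, ?_⟩
      rintro ⟨x, hx⟩
      apply Subtype.ext
      funext i
      exact absurd i.2 (by omega)
    simp [Nat.card_unique]
  · haveI : IsEmpty (sol 0 t) := by
      constructor
      rintro ⟨x, hx⟩
      simp at hx
      exact h hx.symm
    simp [Nat.card_of_isEmpty, h]

lemma wz_succ (j : ℕ) (t : ℤ) : wz (j + 1) t = wz j t + wz (j + 1) (t - (j + 1)) := by
  unfold wz
  rw [Wm_card, Wm_card, Wm_card]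
  have key : Nat.card (sol (j + 1) t) = Nat.card (sol j t) + Nat.card (sol (j + 1) (t - (j + 1))) := by
    rw [Nat.card_congr (solEquiv j t)]
    haveI : Finite {p : ℕ × (Fin j → ℕ) //
        (∑ i : Fin j, ((i : ℕ) + 1 : ℤ) * (p.2 i : ℤ)) + ((j : ℤ) + 1) * (p.1 : ℤ) = t} :=
      inferInstanceAs (Finite (solAux j t))
    refine (card_split (fun c (y : Fin j → ℕ) =>
      (∑ i : Fin j, ((i : ℕ) + 1 : ℤ) * (y i : ℤ)) + ((j : ℤ) + 1) * (c : ℤ) = t)).trans ?_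
    congr 1
    · exact Nat.card_congr (Equiv.subtypeEquivRight (fun y => by push_cast; constructor <;> intro h <;> linarith))
    · refine Eq.trans ?_ (Nat.card_congr (solEquiv j (t - (j + 1)))).symm
      exact Nat.card_congr (Equiv.subtypeEquivRight (fun p => by push_cast; constructor <;> intro h <;> linarith))
  exact_mod_cast congrArg (Nat.cast : ℕ → ℤ) key

def psolZ (m n : ℕ) (s : ℤ) : Type :=
  {x : Fin m → ℕ // (∑ i : Fin m, ((i : ℕ) + 1 : ℤ) * (x i : ℤ) = s) ∧ (∑ i, x i) ≤ n}

def psolAux (m n : ℕ) (s : ℤ) : Type :=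
  {q : ℕ × (Fin m → ℕ) // ((∑ i : Fin m, ((i : ℕ) + 1 : ℤ) * (q.2 i : ℤ)) + ((m : ℤ) + 1) * (q.1 : ℤ) = s) ∧
    (∑ i, q.2 i) + q.1 ≤ n}

instance (m n : ℕ) (s : ℤ) : Finite (psolZ m n s) := by
  haveI : Finite {x : Fin m → ℕ // ∑ i : Fin m, ((i : ℕ) + 1 : ℤ) * (x i : ℤ) = s} :=
    sol_finite m s
  refine Finite.of_injective (fun x : psolZ m n s => (⟨x.1, x.2.1⟩ : sol m s)) ?_
  rintro ⟨a, ha⟩ ⟨b, hb⟩ hab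
  simp only [Subtype.mk.injEq] at hab
  exact Subtype.ext hab

def psolEquiv (m n : ℕ) (s : ℤ) : psolZ (m + 1) n s ≃ psolAux m n s :=
  (snocEquiv m).subtypeEquiv fun x => by
    rw [sum_w_snoc, sum_snoc]
    exact Iff.rfl

instance (m n : ℕ) (s : ℤ) : Finite (psolAux m n s) := Finite.of_equiv _ (psolEquiv m n s)

lemma pcard_neg (m n : ℕ) (s : ℤ) (hs : s < 0) : Nat.card (psolZ m n s) = 0 := by
  haveI : IsEmpty (psolZ m n s) := by
    constructor
    rintro ⟨x, hx1, hx2⟩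
    have : (0 : ℤ) ≤ ∑ i : Fin m, ((i : ℕ) + 1 : ℤ) * (x i : ℤ) := by positivity
    omega
  simp [Nat.card_of_isEmpty]

lemma pcard_zero_m (n : ℕ) (s : ℤ) : Nat.card (psolZ 0 n s) = if s = 0 then 1 else 0 := by
  by_cases h : s = 0
  · subst h
    haveI : Unique (psolZ 0 n 0) := by
      refine ⟨⟨⟨fun i => 0, by simp⟩⟩, ?_⟩
      rintro ⟨x, hx⟩
      apply Subtype.ext
      funext i
      exact absurd i.2 (by omega)
    simp [Nat.card_unique]
  · haveI : IsEmpty (psolZ 0 n s) := by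
      constructor
      rintro ⟨x, hx1, hx2⟩
      simp at hx1
      exact h hx1.symm
    simp [Nat.card_of_isEmpty, h]

lemma pcard_zero_n (m : ℕ) (s : ℤ) : Nat.card (psolZ m 0 s) = if s = 0 then 1 else 0 := by
  by_cases h : s = 0
  · subst h
    haveI : Unique (psolZ m 0 0) := by
      refine ⟨⟨⟨fun i => 0, by simp⟩⟩, ?_⟩
      rintro ⟨x, hx1, hx2⟩
      apply Subtype.ext
      funext i
      have hz : ∀ i' ∈ Finset.univ, x i' = 0 := by
        rw [← Finset.sum_eq_zero_iff]
        omega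
      exact hz i (Finset.mem_univ i)
    simp [Nat.card_unique]
  · haveI : IsEmpty (psolZ m 0 s) := by
      constructor
      rintro ⟨x, hx1, hx2⟩
      have hz : ∀ i' ∈ Finset.univ, x i' = 0 := by
        rw [← Finset.sum_eq_zero_iff]
        omega
      apply h
      rw [← hx1]
      rw [Finset.sum_eq_zero]
      intro i _
      rw [hz i (Finset.mem_univ i)]
      ring
    simp [Nat.card_of_isEmpty, h]

lemma pcard_pascal (m n : ℕ) (s : ℤ) :
    Nat.card (psolZ (m + 1) (n + 1) s) =
      Nat.card (psolZ m (n + 1) s) + Nat.card (psolZ (m + 1) n (s - (m + 1))) := by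
  rw [Nat.card_congr (psolEquiv m (n + 1) s)]
  haveI : Finite {p : ℕ × (Fin m → ℕ) //
      ((∑ i : Fin m, ((i : ℕ) + 1 : ℤ) * (p.2 i : ℤ)) + ((m : ℤ) + 1) * (p.1 : ℤ) = s) ∧
      (∑ i, p.2 i) + p.1 ≤ n + 1} :=
    inferInstanceAs (Finite (psolAux m (n + 1) s))
  refine (card_split (fun c (y : Fin m → ℕ) =>
    ((∑ i : Fin m, ((i : ℕ) + 1 : ℤ) * (y i : ℤ)) + ((m : ℤ) + 1) * (c : ℤ) = s) ∧
    (∑ i, y i) + c ≤ n + 1)).trans ?_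
  congr 1
  · refine Nat.card_congr (Equiv.subtypeEquivRight (fun y => ?_))
    push_cast
    constructor
    · rintro ⟨h1, h2⟩; exact ⟨by linarith, by omega⟩
    · rintro ⟨h1, h2⟩; exact ⟨by linarith, by omega⟩
  · refine Eq.trans ?_ (Nat.card_congr (psolEquiv m n (s - (m + 1)))).symm
    refine Nat.card_congr (Equiv.subtypeEquivRight (fun p => ?_))
    push_cast
    constructor
    · rintro ⟨h1, h2⟩; exact ⟨by linarith, by omega⟩
    · rintro ⟨h1, h2⟩; exact ⟨by linarith, by omega⟩


lemma P_cast (m n s' : ℕ) : P m n s' = Nat.card (psolZ m n (s' : ℤ)) := by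
  unfold P psolZ
  refine Nat.card_congr (Equiv.subtypeEquivRight (fun x => ?_))
  constructor
  · rintro ⟨h1, h2⟩
    refine ⟨?_, h2⟩
    rw [← h1]
    push_cast
    rfl
  · rintro ⟨h1, h2⟩
    refine ⟨?_, h2⟩
    have : ((∑ i : Fin m, ((i : ℕ) + 1) * x i : ℕ) : ℤ) = (s' : ℤ) := by
      rw [← h1]; push_cast; rfl
    exact_mod_cast this

noncomputable def cnv (a b : ℕ) (t : ℤ) : ℤ :=
  ∑ k ∈ Finset.range ((t + 1).toNat), wz a (k : ℤ) * wz b (t - (k : ℤ))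

lemma cnv_neg (a b : ℕ) (t : ℤ) (ht : t < 0) : cnv a b t = 0 := by
  unfold cnv
  have : (t + 1).toNat = 0 := Int.toNat_of_nonpos (by omega)
  rw [this]
  simp

lemma wz_nonneg (j : ℕ) (t : ℤ) : 0 ≤ wz j t := Int.natCast_nonneg _

lemma cnv_comm (a b : ℕ) (t : ℤ) : cnv a b t = cnv b a t := by
  by_cases ht : t < 0
  · rw [cnv_neg a b t ht, cnv_neg b a t ht]
  · push_neg at ht
    have htn : ((t.toNat : ℤ)) = t := Int.toNat_of_nonneg ht
    have hrange : (t + 1).toNat = t.toNat + 1 := by omega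
    unfold cnv
    rw [hrange, ← Finset.sum_range_reflect]
    refine Finset.sum_congr rfl (fun k hk => ?_)
    rw [Finset.mem_range] at hk
    have hk' : k ≤ t.toNat := by omega
    have hcast : ((t.toNat + 1 - 1 - k : ℕ) : ℤ) = t - k := by
      push_cast [Nat.cast_sub hk']
      omega
    rw [hcast]
    have : t - (t - (k : ℤ)) = k := by ring
    rw [this, mul_comm]

lemma cnv_zero_right (a : ℕ) (t : ℤ) : cnv a 0 t = wz a t := by
  by_cases ht : t < 0
  · rw [cnv_neg a 0 t ht, wz_neg a t ht]
  · push_neg at ht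
    have htn : ((t.toNat : ℤ)) = t := Int.toNat_of_nonneg ht
    have hrange : (t + 1).toNat = t.toNat + 1 := by omega
    unfold cnv
    rw [hrange]
    have hterm : ∀ k ∈ Finset.range (t.toNat + 1),
        wz a (k : ℤ) * wz 0 (t - (k : ℤ)) = if k = t.toNat then wz a (k : ℤ) else 0 := by
      intro k hk
      rw [Finset.mem_range] at hk
      rw [wz_zero]
      by_cases hkt : k = t.toNat
      · subst hkt
        rw [if_pos (by omega), if_pos rfl, mul_one]
      · rw [if_neg (by omega), if_neg hkt, mul_zero]
    rw [Finset.sum_congr rfl hterm, Finset.sum_ite_eq' (Finset.range (t.toNat + 1)) t.toNat]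
    rw [if_pos (Finset.self_mem_range_succ t.toNat), htn]

lemma cnv_left_rec (a b : ℕ) (t : ℤ) :
    cnv (a + 1) b t = cnv a b t + cnv (a + 1) b (t - (a + 1)) := by
  by_cases ht : t < 0
  · rw [cnv_neg _ _ _ ht, cnv_neg _ _ _ ht, cnv_neg _ _ _ (by omega)]
    ring
  · push_neg at ht
    have htn : ((t.toNat : ℤ)) = t := Int.toNat_of_nonneg ht
    have hrange : (t + 1).toNat = t.toNat + 1 := by omega
    unfold cnv
    rw [hrange]
    have hsplit : ∀ k ∈ Finset.range (t.toNat + 1),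
        wz (a + 1) (k : ℤ) * wz b (t - (k : ℤ)) =
          wz a (k : ℤ) * wz b (t - (k : ℤ)) +
            wz (a + 1) ((k : ℤ) - (a + 1)) * wz b (t - (k : ℤ)) := by
      intro k _
      rw [wz_succ a (k : ℤ), add_mul]
    rw [Finset.sum_congr rfl hsplit, Finset.sum_add_distrib]
    congr 1
    by_cases hn : t.toNat < a + 1
    · have h1 : ∑ k ∈ Finset.range (t.toNat + 1),
          wz (a + 1) ((k : ℤ) - (a + 1)) * wz b (t - (k : ℤ)) = 0 := by
        refine Finset.sum_eq_zero (fun k hk => ?_)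
        rw [Finset.mem_range] at hk
        rw [wz_neg (a + 1) _ (by push_cast; omega), zero_mul]
      have h2 : (t - ((a : ℤ) + 1) + 1).toNat = 0 := by omega
      rw [h1, h2]
      simp
    · push_neg at hn
      rw [Finset.range_eq_Ico,
        ← Finset.sum_Ico_consecutive _ (Nat.zero_le (a + 1)) (by omega : a + 1 ≤ t.toNat + 1)]
      have h0 : ∑ k ∈ Finset.Ico 0 (a + 1),
          wz (a + 1) ((k : ℤ) - (a + 1)) * wz b (t - (k : ℤ)) = 0 := by
        refine Finset.sum_eq_zero (fun k hk => ?_)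
        rw [Finset.mem_Ico] at hk
        rw [wz_neg (a + 1) _ (by push_cast; omega), zero_mul]
      rw [h0, zero_add, Finset.sum_Ico_eq_sum_range]
      have harg : (t - (a + 1) + 1).toNat = t.toNat + 1 - (a + 1) := by omega
      rw [harg]
      refine Finset.sum_congr rfl (fun k hk => ?_)
      push_cast
      ring_nf

lemma cnv_right_rec (a b : ℕ) (t : ℤ) :
    cnv a (b + 1) t = cnv a b t + cnv a (b + 1) (t - (b + 1)) := by
  rw [cnv_comm a (b + 1) t, cnv_comm a b t, cnv_comm a (b + 1) (t - (b + 1))]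
  exact cnv_left_rec b a t


lemma tri_two (j : ℕ) : tri j * 2 = j * (j + 1) :=
  Nat.div_mul_cancel (Nat.even_mul_succ_self j).two_dvd

lemma tri_succ (j : ℕ) : tri (j + 1) = tri j + (j + 1) := by
  have h1 := tri_two j
  have h2 := tri_two (j + 1)
  nlinarith [h1, h2]

lemma tri_zero : tri 0 = 0 := rfl

lemma tri_pos (j : ℕ) (hj : 1 ≤ j) : 1 ≤ tri j := by
  have := tri_two j
  nlinarith

noncomputable def RR (M n : ℕ) (s : ℤ) : ℤ :=
  ∑ i ∈ Finset.range (M + 1), (-1 : ℤ) ^ i * cnv (M - i) i (s - (n : ℤ) * (i : ℤ) - (tri i : ℤ))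

lemma RR_neg (M n : ℕ) (s : ℤ) (hs : s < 0) : RR M n s = 0 := by
  unfold RR
  refine Finset.sum_eq_zero (fun i _ => ?_)
  have h1 : (0 : ℤ) ≤ (n : ℤ) * (i : ℤ) := by positivity
  have h2 : (0 : ℤ) ≤ ((tri i : ℕ) : ℤ) := Int.natCast_nonneg _
  rw [cnv_neg (M - i) i _ (by linarith)]
  ring

lemma RR_zero_M (n : ℕ) (s : ℤ) : RR 0 n s = if s = 0 then 1 else 0 := by
  unfold RR
  rw [Finset.sum_range_one]
  simp only [Nat.sub_zero, pow_zero, one_mul, Nat.cast_zero, mul_zero, sub_zero, tri_zero]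
  rw [cnv_zero_right 0 s, wz_zero]

lemma RR_pascal (M n : ℕ) (s : ℤ) :
    RR (M + 1) (n + 1) s = RR M (n + 1) s + RR (M + 1) n (s - ((M : ℤ) + 1)) := by
  unfold RR
  rw [Finset.sum_range_succ, Finset.sum_range_succ
    (fun i => (-1 : ℤ) ^ i * cnv (M + 1 - i) i (s - ((M : ℤ) + 1) - (n : ℤ) * (i : ℤ) - (tri i : ℤ)))]
  have hterm : ∀ i ∈ Finset.range (M + 1),
      (-1 : ℤ) ^ i * cnv (M + 1 - i) i (s - ((n + 1 : ℕ) : ℤ) * (i : ℤ) - (tri i : ℤ)) =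
        (-1 : ℤ) ^ i * cnv (M - i) i (s - ((n + 1 : ℕ) : ℤ) * (i : ℤ) - (tri i : ℤ)) +
        (-1 : ℤ) ^ i * cnv (M + 1 - i) i (s - ((M : ℤ) + 1) - (n : ℤ) * (i : ℤ) - (tri i : ℤ)) := by
    intro i hi
    rw [Finset.mem_range] at hi
    have hle : i ≤ M := by omega
    have hM : M + 1 - i = (M - i) + 1 := by omega
    have hcast : ((M - i : ℕ) : ℤ) = (M : ℤ) - (i : ℤ) := by push_cast [Nat.cast_sub hle]; ring
    rw [hM, cnv_left_rec (M - i) i]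
    have harg : s - ((n + 1 : ℕ) : ℤ) * (i : ℤ) - (tri i : ℤ) - (((M - i : ℕ) : ℤ) + 1) =
        s - ((M : ℤ) + 1) - (n : ℤ) * (i : ℤ) - (tri i : ℤ) := by
      rw [hcast]; push_cast; ring
    rw [← hM, harg, mul_add]
  rw [Finset.sum_congr rfl hterm, Finset.sum_add_distrib]
  have hlast : (-1 : ℤ) ^ (M + 1) * cnv (M + 1 - (M + 1)) (M + 1)
        (s - ((n + 1 : ℕ) : ℤ) * ((M + 1 : ℕ) : ℤ) - (tri (M + 1) : ℤ)) =
      (-1 : ℤ) ^ (M + 1) * cnv (M + 1 - (M + 1)) (M + 1)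
        (s - ((M : ℤ) + 1) - (n : ℤ) * ((M + 1 : ℕ) : ℤ) - (tri (M + 1) : ℤ)) := by
    congr 1
    push_cast
    ring
  rw [hlast]
  ring

lemma RR_zero_key (M : ℕ) (s : ℤ) :
    RR (M + 1) 0 s = RR M 0 s - RR M 0 (s - ((M : ℤ) + 1)) + RR (M + 1) 0 (s - ((M : ℤ) + 1)) := by
  -- normalized forms of the four RR's
  have hRR : ∀ (K : ℕ) (u : ℤ), RR K 0 u =
      ∑ i ∈ Finset.range (K + 1), (-1 : ℤ) ^ i * cnv (K - i) i (u - (tri i : ℤ)) := by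
    intro K u
    unfold RR
    simp only [Nat.cast_zero, zero_mul, sub_zero]
  have hA : RR (M + 1) 0 s = RR M 0 s +
      ∑ i ∈ Finset.range (M + 2), (-1 : ℤ) ^ i *
        cnv (M + 1 - i) i (s - (tri i : ℤ) - ((M + 1 - i : ℕ) : ℤ)) := by
    rw [hRR (M + 1) s, hRR M s]
    rw [Finset.sum_range_succ (fun i => (-1 : ℤ) ^ i * cnv (M + 1 - i) i (s - (tri i : ℤ))),
      Finset.sum_range_succ (fun i => (-1 : ℤ) ^ i *
        cnv (M + 1 - i) i (s - (tri i : ℤ) - ((M + 1 - i : ℕ) : ℤ)))]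
    have hterm : ∀ i ∈ Finset.range (M + 1),
        (-1 : ℤ) ^ i * cnv (M + 1 - i) i (s - (tri i : ℤ)) =
          (-1 : ℤ) ^ i * cnv (M - i) i (s - (tri i : ℤ)) +
          (-1 : ℤ) ^ i * cnv (M + 1 - i) i (s - (tri i : ℤ) - ((M + 1 - i : ℕ) : ℤ)) := by
      intro i hi
      rw [Finset.mem_range] at hi
      have hle : i ≤ M := by omega
      have hM : M + 1 - i = (M - i) + 1 := by omega
      have hsh : s - (tri i : ℤ) - (((M - i : ℕ) : ℤ) + 1) =
          s - (tri i : ℤ) - ((M + 1 - i : ℕ) : ℤ) := by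
        have : ((M + 1 - i : ℕ) : ℤ) = ((M - i : ℕ) : ℤ) + 1 := by omega
        rw [this]
      rw [hM, cnv_left_rec (M - i) i, hsh, ← hM, mul_add]
    rw [Finset.sum_congr rfl hterm, Finset.sum_add_distrib]
    have hlast : (-1 : ℤ) ^ (M + 1) * cnv (M + 1 - (M + 1)) (M + 1) (s - (tri (M + 1) : ℤ)) =
        (-1 : ℤ) ^ (M + 1) * cnv (M + 1 - (M + 1)) (M + 1)
          (s - (tri (M + 1) : ℤ) - ((M + 1 - (M + 1) : ℕ) : ℤ)) := by
      rw [Nat.sub_self]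
      norm_num
    rw [hlast]
    ring
  have hB : ∑ i ∈ Finset.range (M + 2), (-1 : ℤ) ^ i *
        cnv (M + 1 - i) i (s - (tri i : ℤ) - ((M + 1 - i : ℕ) : ℤ)) =
      RR (M + 1) 0 (s - ((M : ℤ) + 1)) - RR M 0 (s - ((M : ℤ) + 1)) := by
    rw [Finset.sum_range_succ' (fun i => (-1 : ℤ) ^ i *
      cnv (M + 1 - i) i (s - (tri i : ℤ) - ((M + 1 - i : ℕ) : ℤ))) (M + 1)]
    have hterm : ∀ i ∈ Finset.range (M + 1),
        (-1 : ℤ) ^ (i + 1) * cnv (M + 1 - (i + 1)) (i + 1)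
            (s - (tri (i + 1) : ℤ) - ((M + 1 - (i + 1) : ℕ) : ℤ)) =
          -((-1 : ℤ) ^ i * cnv (M - i) i ((s - ((M : ℤ) + 1)) - (tri i : ℤ))) +
          (-1 : ℤ) ^ (i + 1) * cnv (M + 1 - (i + 1)) (i + 1)
            ((s - ((M : ℤ) + 1)) - (tri (i + 1) : ℤ)) := by
      intro i hi
      rw [Finset.mem_range] at hi
      have hle : i ≤ M := by omega
      have h1 : M + 1 - (i + 1) = M - i := by omega
      have hcast : ((M - i : ℕ) : ℤ) = (M : ℤ) - (i : ℤ) := by omega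
      have htri : ((tri (i + 1) : ℕ) : ℤ) = (tri i : ℤ) + (i : ℤ) + 1 := by
        rw [tri_succ]; push_cast; ring
      have hu : s - (tri (i + 1) : ℤ) - ((M - i : ℕ) : ℤ) =
          (s - ((M : ℤ) + 1)) - (tri i : ℤ) := by
        rw [hcast, htri]; ring
      have hu2 : (s - ((M : ℤ) + 1)) - (tri i : ℤ) - ((i : ℤ) + 1) =
          (s - ((M : ℤ) + 1)) - (tri (i + 1) : ℤ) := by
        rw [htri]; ring
      rw [h1, hu, cnv_right_rec (M - i) i, hu2, ← h1]
      ring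
    rw [Finset.sum_congr rfl hterm, Finset.sum_add_distrib]
    have hfirst : (-1 : ℤ) ^ 0 * cnv (M + 1 - 0) 0 (s - (tri 0 : ℤ) - ((M + 1 - 0 : ℕ) : ℤ)) =
        (-1 : ℤ) ^ 0 * cnv (M + 1 - 0) 0 ((s - ((M : ℤ) + 1)) - (tri 0 : ℤ)) := by
      congr 1
      rw [tri_zero]
      push_cast
      ring
    rw [hfirst]
    have hsum2 : ∑ i ∈ Finset.range (M + 1), (-1 : ℤ) ^ (i + 1) *
          cnv (M + 1 - (i + 1)) (i + 1) ((s - ((M : ℤ) + 1)) - (tri (i + 1) : ℤ)) +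
        (-1 : ℤ) ^ 0 * cnv (M + 1 - 0) 0 ((s - ((M : ℤ) + 1)) - (tri 0 : ℤ)) =
        RR (M + 1) 0 (s - ((M : ℤ) + 1)) := by
      rw [hRR (M + 1) (s - ((M : ℤ) + 1))]
      rw [Finset.sum_range_succ' (fun i => (-1 : ℤ) ^ i *
        cnv (M + 1 - i) i ((s - ((M : ℤ) + 1)) - (tri i : ℤ))) (M + 1)]
    have hsum1 : ∑ i ∈ Finset.range (M + 1),
          -((-1 : ℤ) ^ i * cnv (M - i) i ((s - ((M : ℤ) + 1)) - (tri i : ℤ))) =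
        -RR M 0 (s - ((M : ℤ) + 1)) := by
      rw [hRR M (s - ((M : ℤ) + 1))]
      rw [← Finset.sum_neg_distrib]
    linear_combination hsum1 + hsum2
  rw [hA, hB]
  ring

lemma RR_zero (M : ℕ) : ∀ s : ℤ, RR M 0 s = if s = 0 then 1 else 0 := by
  induction M with
  | zero => intro s; exact RR_zero_M 0 s
  | succ M ih =>
    have key : ∀ k : ℕ, RR (M + 1) 0 (k : ℤ) = if (k : ℤ) = 0 then 1 else 0 := by
      intro k
      induction k using Nat.strong_induction_on with
      | _ k ihk =>
        have hk := RR_zero_key M (k : ℤ)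
        rw [ih ((k : ℤ)), ih ((k : ℤ) - ((M : ℤ) + 1))] at hk
        by_cases h1 : (k : ℤ) - ((M : ℤ) + 1) < 0
        · rw [RR_neg (M + 1) 0 _ h1] at hk
          rw [hk, if_neg (show ¬((k : ℤ) - ((M : ℤ) + 1) = 0) by omega)]
          ring
        · push_neg at h1
          have hkk : ((k - (M + 1) : ℕ) : ℤ) = (k : ℤ) - ((M : ℤ) + 1) := by omega
          have hikk := ihk (k - (M + 1)) (by omega)
          rw [hkk] at hikk
          rw [hikk] at hk
          linear_combination hk
    intro s
    by_cases hs : s < 0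
    · rw [RR_neg _ _ _ hs, if_neg (by omega)]
    · push_neg at hs
      have h2 : s = ((s.toNat : ℕ) : ℤ) := (Int.toNat_of_nonneg hs).symm
      rw [h2]
      exact key s.toNat

lemma main_eq (m : ℕ) : ∀ (n : ℕ) (s : ℤ), ((Nat.card (psolZ m n s) : ℕ) : ℤ) = RR m n s := by
  induction m with
  | zero =>
    intro n s
    rw [pcard_zero_m, RR_zero_M]
    split_ifs <;> simp
  | succ m ihm =>
    intro n
    induction n with
    | zero =>
      intro s
      rw [pcard_zero_n, RR_zero]
      split_ifs <;> simp
    | succ n ihn =>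
      intro s
      have hp : ((Nat.card (psolZ (m + 1) (n + 1) s) : ℕ) : ℤ) =
          ((Nat.card (psolZ m (n + 1) s) : ℕ) : ℤ) +
            ((Nat.card (psolZ (m + 1) n (s - ((m : ℤ) + 1))) : ℕ) : ℤ) := by
        exact_mod_cast congrArg (Nat.cast : ℕ → ℤ) (pcard_pascal m n s)
      rw [hp, ihm (n + 1) s, ihn (s - ((m : ℤ) + 1)), RR_pascal]

/-- in the `r`-th chamber `(r−1)n ≤ s ≤ rn`, the Gaussian polynomial
coefficient is given by
`P_m^n(s) = W_m(s) + Σ_{i=1}^{r−1} (−1)^{i}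
Σ_{k=0}^{s − i n − s_i} W_{m−i}(k) W_i(s − n i − s_i − k)`. -/
theorem gaussian_chamber_formula' (m n r s : ℕ) (hm : 1 ≤ m) (hn : 1 ≤ n)
    (hr1 : 1 ≤ r) (hrm : r ≤ m) (hs1 : (r - 1) * n ≤ s) (hs2 : s ≤ r * n) :
    (P m n s : ℤ) = (Wm m (s : ℤ) : ℤ) +
      ∑ i ∈ Finset.Icc 1 (r - 1), (-1 : ℤ) ^ i *
        ∑ k ∈ Finset.range
            (((s : ℤ) - (i : ℤ) * (n : ℤ) - (tri i : ℤ) + 1).toNat),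
          (Wm (m - i) (k : ℤ) : ℤ) *
            (Wm i ((s : ℤ) - (n : ℤ) * (i : ℤ) - (tri i : ℤ) - (k : ℤ)) : ℤ) := by
  have h1 : (P m n s : ℤ) = RR m n (s : ℤ) := by
    rw [P_cast]
    exact main_eq m n (s : ℤ)
  rw [h1]
  unfold RR
  rw [Finset.range_eq_Ico, ← Finset.sum_Ico_consecutive _ (Nat.zero_le r) (by omega : r ≤ m + 1)]
  have hzero : ∑ i ∈ Finset.Ico r (m + 1),
      (-1 : ℤ) ^ i * cnv (m - i) i ((s : ℤ) - (n : ℤ) * (i : ℤ) - (tri i : ℤ)) = 0 := by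
    refine Finset.sum_eq_zero (fun i hi => ?_)
    rw [Finset.mem_Ico] at hi
    have hri : r ≤ i := hi.1
    have h2 : (s : ℤ) ≤ (r : ℤ) * (n : ℤ) := by exact_mod_cast hs2
    have h3 : (r : ℤ) * (n : ℤ) ≤ (n : ℤ) * (i : ℤ) := by
      have hri' : (r : ℤ) ≤ (i : ℤ) := by exact_mod_cast hri
      have hn0 : (0 : ℤ) ≤ (n : ℤ) := by positivity
      nlinarith
    have h4 : (1 : ℤ) ≤ (tri i : ℤ) := by exact_mod_cast tri_pos i (le_trans hr1 hri)
    rw [cnv_neg _ _ _ (by linarith)]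
    ring
  rw [hzero, add_zero]
  rw [Finset.sum_eq_sum_Ico_succ_bot (by omega : 0 < r)]
  have h0 : (-1 : ℤ) ^ 0 * cnv (m - 0) 0 ((s : ℤ) - (n : ℤ) * ((0 : ℕ) : ℤ) - (tri 0 : ℤ)) =
      (Wm m (s : ℤ) : ℤ) := by
    simp only [pow_zero, one_mul, Nat.sub_zero, Nat.cast_zero, mul_zero, sub_zero, tri_zero]
    rw [cnv_zero_right]
    rfl
  rw [h0]
  congr 1
  rw [show Finset.Ico 1 r = Finset.Icc 1 (r - 1) by rw [← Finset.Ico_add_one_right_eq_Icc]; congr 1; omega]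
  refine Finset.sum_congr rfl (fun i hi => ?_)
  congr 1
  unfold cnv wz
  rw [show ((s : ℤ) - (n : ℤ) * (i : ℤ) - (tri i : ℤ) + 1).toNat =
      ((s : ℤ) - (i : ℤ) * (n : ℤ) - (tri i : ℤ) + 1).toNat from congrArg Int.toNat (by ring)]
end

section
/- For every natural number s, the restricted partition function W_5 satisfies, as an identity of real numbers: W_5(s) = (s⁴ + 30s³ + 310s² + 1275s + 1687)/2880 + 41/86400 + ((2s+15)/128)·cos(πs) + (2/27)·cos(2πs/3) + (1/16)·( cos(πs/2) + sin(πs/2) ) + (2/25)·( cos(2πs/5) + cos(4πs/5) ). -/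
open Finset

lemma W_nil (t : ℤ) : W t [] = if t = 0 then 1 else 0 := by
  unfold W
  split
  · next h =>
    subst h
    rw [Nat.card_eq_one_iff_unique]
    constructor
    · constructor
      rintro ⟨x, hx⟩ ⟨y, hy⟩
      ext i
      exact Fin.elim0 i
    · exact ⟨⟨finZeroElim, by simp⟩⟩
  · next h =>
    rw [Nat.card_eq_zero]
    left
    constructor
    rintro ⟨x, hx⟩
    simp at hx
    exact h hx.symm

lemma W_neg (t : ℤ) (ht : t < 0) (d : List ℕ) : W t d = 0 := by
  unfold W
  rw [Nat.card_eq_zero]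
  left
  constructor
  rintro ⟨x, hx⟩
  have : (0:ℤ) ≤ ∑ i, (d.get i : ℤ) * (x i : ℤ) := by positivity
  omega

def natSplit {γ : Type*} (Q : ℕ → γ → Prop) :
    {p : ℕ × γ // Q p.1 p.2} ≃ {y : γ // Q 0 y} ⊕ {p : ℕ × γ // Q (p.1+1) p.2} where
  toFun := fun ⟨⟨k, y⟩, h⟩ => match k, h with
    | 0, h => Sum.inl ⟨y, h⟩
    | k+1, h => Sum.inr ⟨(k, y), h⟩
  invFun := fun s => match s with
    | Sum.inl ⟨y, h⟩ => ⟨(0, y), h⟩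
    | Sum.inr ⟨⟨k, y⟩, h⟩ => ⟨(k+1, y), h⟩
  left_inv := by rintro ⟨⟨(_|k), y⟩, h⟩ <;> rfl
  right_inv := by rintro (⟨y,h⟩|⟨⟨k,y⟩,h⟩) <;> rfl

lemma sum_bound {d : List ℕ} (hd : ∀ b ∈ d, 1 ≤ b) (x : Fin d.length → ℕ) {t : ℤ}
    (hx : ∑ i, (d.get i : ℤ) * (x i : ℤ) = t) (i : Fin d.length) : (x i : ℤ) ≤ t := by
  have h1 : (1:ℤ) ≤ (d.get i : ℤ) := by exact_mod_cast hd _ (List.get_mem ..)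
  calc (x i : ℤ) ≤ (d.get i : ℤ) * x i := le_mul_of_one_le_left (by positivity) h1
  _ ≤ ∑ j, (d.get j : ℤ) * (x j : ℤ) :=
      Finset.single_le_sum (f := fun j => (d.get j : ℤ) * (x j : ℤ))
        (fun j _ => by positivity) (mem_univ i)
  _ = t := hx

lemma W_finite (t : ℤ) (d : List ℕ) (hd : ∀ b ∈ d, 1 ≤ b) :
    Finite {x : Fin d.length → ℕ // ∑ i, (d.get i : ℤ) * (x i : ℤ) = t} := by
  apply Finite.of_injective
    (f := fun (p : {x : Fin d.length → ℕ // ∑ i, (d.get i : ℤ) * (x i : ℤ) = t})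
      (i : Fin d.length) => (⟨p.1 i, by
        have := sum_bound hd p.1 p.2 i
        omega⟩ : Fin (t.toNat + 1)))
  rintro ⟨x, hx⟩ ⟨y, hy⟩ h
  ext i
  have := congrFun h i
  simpa using this

lemma W_cons (t : ℤ) (a : ℕ) (d : List ℕ) (hd : ∀ b ∈ a::d, 1 ≤ b) :
    W t (a :: d) = W t d + W (t - a) (a :: d) := by
  haveI h1 := W_finite t d (fun b hb => hd b (List.mem_cons_of_mem a hb))
  haveI h2 := W_finite (t - a) (a::d) hd
  unfold W
  have key : ∀ (u : ℤ) (x : Fin (d.length+1) → ℕ),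
      (∑ i : Fin (d.length+1), ((a::d).get i : ℤ) * (x i : ℤ) = u) ↔
      ((a:ℤ) * (x 0 : ℤ) + ∑ i : Fin d.length, (d.get i : ℤ) * (x i.succ : ℤ) = u) := by
    intro u x
    rw [Fin.sum_univ_succ]
    rfl
  have e : {x : Fin (a::d).length → ℕ // ∑ i, ((a::d).get i : ℤ) * (x i : ℤ) = t} ≃
      {x : Fin d.length → ℕ // ∑ i, (d.get i : ℤ) * (x i : ℤ) = t} ⊕
      {x : Fin (a::d).length → ℕ // ∑ i, ((a::d).get i : ℤ) * (x i : ℤ) = t - a} := by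
    refine ((Equiv.subtypeEquiv ((Fin.consEquiv (fun _ : Fin (d.length+1) => ℕ)).symm) ?_).trans
      ((natSplit (fun k y => (a:ℤ) * (k:ℤ) + ∑ i, (d.get i : ℤ) * (y i : ℤ) = t)).trans
      (Equiv.sumCongr (Equiv.subtypeEquiv (Equiv.refl _) ?_)
        ((Equiv.subtypeEquiv ((Fin.consEquiv (fun _ : Fin (d.length+1) => ℕ)).symm) ?_).symm))))
    · intro x
      show (∑ i : Fin (d.length+1), ((a::d).get i : ℤ) * (x i : ℤ) = t) ↔
        ((a:ℤ) * (x 0 : ℤ) + ∑ i : Fin d.length, (d.get i:ℤ) * (x i.succ : ℤ) = t)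
      exact key t x
    · intro y; simp
    · intro x
      show (∑ i : Fin (d.length+1), ((a::d).get i : ℤ) * (x i : ℤ) = t - a) ↔
        ((a:ℤ) * ((x 0 + 1 : ℕ) : ℤ) + ∑ i : Fin d.length, (d.get i:ℤ) * (x i.succ : ℤ) = t)
      rw [key]
      push_cast
      constructor <;> intro h <;> linarith
  rw [Nat.card_congr e, Nat.card_sum]
lemma ca1 (u : ℤ) : (W u [1,2,3,4,5] : ℤ) = (W u [2,3,4,5] : ℤ) + (W (u - 1) [1,2,3,4,5] : ℤ) := by
  exact_mod_cast congrArg (Nat.cast : ℕ → ℤ) (W_cons u 1 [2,3,4,5] (by decide))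

lemma ca2 (u : ℤ) : (W u [2,3,4,5] : ℤ) = (W u [3,4,5] : ℤ) + (W (u - 2) [2,3,4,5] : ℤ) := by
  exact_mod_cast congrArg (Nat.cast : ℕ → ℤ) (W_cons u 2 [3,4,5] (by decide))

lemma ca3 (u : ℤ) : (W u [3,4,5] : ℤ) = (W u [4,5] : ℤ) + (W (u - 3) [3,4,5] : ℤ) := by
  exact_mod_cast congrArg (Nat.cast : ℕ → ℤ) (W_cons u 3 [4,5] (by decide))

lemma ca4 (u : ℤ) : (W u [4,5] : ℤ) = (W u [5] : ℤ) + (W (u - 4) [4,5] : ℤ) := by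
  exact_mod_cast congrArg (Nat.cast : ℕ → ℤ) (W_cons u 4 [5] (by decide))

lemma ca5 (u : ℤ) : (W u [5] : ℤ) = (W u [] : ℤ) + (W (u - 5) [5] : ℤ) := by
  exact_mod_cast congrArg (Nat.cast : ℕ → ℤ) (W_cons u 5 [] (by decide))

lemma Ha (u : ℤ) : (W u [2,3,4,5] : ℤ) = (W u [1,2,3,4,5] : ℤ) - (W (u - 1) [1,2,3,4,5] : ℤ) := by
  linear_combination -(ca1 u)

lemma Hb (u : ℤ) : (W u [3,4,5] : ℤ) = (W u [1,2,3,4,5] : ℤ) - (W (u - 1) [1,2,3,4,5] : ℤ) - (W (u - 2) [1,2,3,4,5] : ℤ) + (W (u - 3) [1,2,3,4,5] : ℤ) := by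
  have h := Ha (u - 2)
  rw [show u - 2 - 1 = u - 3 by ring] at h
  linear_combination (Ha u) - h - ca2 u

lemma Hc (u : ℤ) : (W u [4,5] : ℤ) = (W u [1,2,3,4,5] : ℤ) - (W (u - 1) [1,2,3,4,5] : ℤ) - (W (u - 2) [1,2,3,4,5] : ℤ) + (W (u - 4) [1,2,3,4,5] : ℤ) + (W (u - 5) [1,2,3,4,5] : ℤ) - (W (u - 6) [1,2,3,4,5] : ℤ) := by
  have h := Hb (u - 3)
  rw [show u - 3 - 1 = u - 4 by ring, show u - 3 - 2 = u - 5 by ring, show u - 3 - 3 = u - 6 by ring] at h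
  linear_combination (Hb u) - h - ca3 u

lemma Hd (u : ℤ) : (W u [5] : ℤ) = (W u [1,2,3,4,5] : ℤ) - (W (u - 1) [1,2,3,4,5] : ℤ) - (W (u - 2) [1,2,3,4,5] : ℤ) + 2 * (W (u - 5) [1,2,3,4,5] : ℤ) - (W (u - 8) [1,2,3,4,5] : ℤ) - (W (u - 9) [1,2,3,4,5] : ℤ) + (W (u - 10) [1,2,3,4,5] : ℤ) := by
  have h := Hc (u - 4)
  rw [show u - 4 - 1 = u - 5 by ring, show u - 4 - 2 = u - 6 by ring, show u - 4 - 4 = u - 8 by ring, show u - 4 - 5 = u - 9 by ring, show u - 4 - 6 = u - 10 by ring] at h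
  linear_combination (Hc u) - h - ca4 u

lemma He (u : ℤ) : (W u [] : ℤ) = (W u [1,2,3,4,5] : ℤ) - (W (u - 1) [1,2,3,4,5] : ℤ) - (W (u - 2) [1,2,3,4,5] : ℤ) + (W (u - 5) [1,2,3,4,5] : ℤ) + (W (u - 6) [1,2,3,4,5] : ℤ) + (W (u - 7) [1,2,3,4,5] : ℤ) - (W (u - 8) [1,2,3,4,5] : ℤ) - (W (u - 9) [1,2,3,4,5] : ℤ) - (W (u - 10) [1,2,3,4,5] : ℤ) + (W (u - 13) [1,2,3,4,5] : ℤ) + (W (u - 14) [1,2,3,4,5] : ℤ) - (W (u - 15) [1,2,3,4,5] : ℤ) := by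
  have h := Hd (u - 5)
  rw [show u - 5 - 1 = u - 6 by ring, show u - 5 - 2 = u - 7 by ring, show u - 5 - 5 = u - 10 by ring, show u - 5 - 8 = u - 13 by ring, show u - 5 - 9 = u - 14 by ring, show u - 5 - 10 = u - 15 by ring] at h
  linear_combination (Hd u) - h - ca5 u

lemma W5_rec (t : ℤ) : (if t = 0 then (1:ℤ) else 0) = (W t [1,2,3,4,5] : ℤ) - (W (t - 1) [1,2,3,4,5] : ℤ) - (W (t - 2) [1,2,3,4,5] : ℤ) + (W (t - 5) [1,2,3,4,5] : ℤ) + (W (t - 6) [1,2,3,4,5] : ℤ) + (W (t - 7) [1,2,3,4,5] : ℤ) - (W (t - 8) [1,2,3,4,5] : ℤ) - (W (t - 9) [1,2,3,4,5] : ℤ) - (W (t - 10) [1,2,3,4,5] : ℤ) + (W (t - 13) [1,2,3,4,5] : ℤ) + (W (t - 14) [1,2,3,4,5] : ℤ) - (W (t - 15) [1,2,3,4,5] : ℤ) := by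
  have h := He t
  rw [W_nil] at h
  rw [show ((if t = 0 then 1 else 0 : ℕ) : ℤ) = (if t = 0 then (1:ℤ) else 0) by split <;> simp] at h
  exact h

def ppF : ℕ → List ℕ → ℕ → ℕ
  | 0, _, _ => 0
  | _+1, [], n => if n = 0 then 1 else 0
  | fuel+1, a :: l, n => ppF fuel l n + if 0 < a ∧ a ≤ n then ppF fuel (a::l) (n-a) else 0

lemma W_eq_ppF : ∀ (fuel : ℕ) (l : List ℕ), (∀ b ∈ l, 1 ≤ b) → ∀ n : ℕ,
    l.length + n < fuel → W (n:ℤ) l = ppF fuel l n := by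
  intro fuel
  induction fuel with
  | zero => intro l _ n h; omega
  | succ fuel ih =>
    intro l hl n h
    match l with
    | [] =>
      rw [W_nil, ppF]
      rcases n with _ | n <;> simp <;> omega
    | a :: l =>
      have ha : 1 ≤ a := hl a (by simp)
      have hl' : ∀ b ∈ l, 1 ≤ b := fun b hb => hl b (List.mem_cons_of_mem a hb)
      rw [W_cons _ _ _ hl, ppF]
      simp only [List.length_cons] at h
      by_cases hc : a ≤ n
      · rw [if_pos ⟨ha, hc⟩, ih l hl' n (by omega),
          show (n : ℤ) - a = ((n - a : ℕ) : ℤ) by omega,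
          ih (a::l) hl (n - a) (by simp; omega)]
      · rw [if_neg (by omega), W_neg ((n:ℤ) - a) (by omega), ih l hl' n (by omega)]

lemma W5_val (n : ℕ) : W (n:ℤ) [1,2,3,4,5] = ppF (6+n) [1,2,3,4,5] n :=
  W_eq_ppF (6+n) _ (by decide) n (by simp)

def g3 (n : ℕ) : ℤ := if n % 3 = 0 then 6400 else -3200
def g4 (n : ℕ) : ℤ := if n % 4 ≤ 1 then 5400 else -5400
def g5 (n : ℕ) : ℤ := if n % 5 = 0 then 13824 else -3456

lemma g3_add (n : ℕ) : g3 (n + 3) = g3 n := by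
  unfold g3; rw [show (n+3)%3 = n%3 by omega]

lemma g4_add (n : ℕ) : g4 (n + 2) = -g4 n := by
  unfold g4; split_ifs <;> omega

lemma g5_add (n : ℕ) : g5 (n + 5) = g5 n := by
  unfold g5; rw [show (n+5)%5 = n%5 by omega]

def RHSF (n : ℕ) : ℤ :=
  30*((n:ℤ)^4+30*(n:ℤ)^3+310*(n:ℤ)^2+1275*(n:ℤ)+1687) + 41
    + 675*(2*(n:ℤ)+15)*(-1)^n + g3 n + g4 n + g5 n

lemma key : ∀ n : ℕ, 86400 * (W (n:ℤ) [1,2,3,4,5] : ℤ) = RHSF n := by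
  intro n
  induction n using Nat.strong_induction_on with
  | _ n ih =>
  by_cases hn : n < 15
  · interval_cases n <;> rw [W5_val] <;> decide
  · obtain ⟨m, rfl⟩ : ∃ m, n = m + 15 := ⟨n - 15, by omega⟩
    have E3_3 : g3 (m + 3) = g3 m := by exact g3_add m
    have E3_4 : g3 (m + 4) = g3 (m + 1) := by rw [show m + 4 = (m + 1) + 3 by omega, g3_add]
    have E3_5 : g3 (m + 5) = g3 (m + 2) := by rw [show m + 5 = (m + 2) + 3 by omega, g3_add]
    have E3_6 : g3 (m + 6) = g3 m := by rw [show m + 6 = (m + 3) + 3 by omega, g3_add]; rw [E3_3]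
    have E3_7 : g3 (m + 7) = g3 (m + 1) := by rw [show m + 7 = (m + 4) + 3 by omega, g3_add]; rw [E3_4]
    have E3_8 : g3 (m + 8) = g3 (m + 2) := by rw [show m + 8 = (m + 5) + 3 by omega, g3_add]; rw [E3_5]
    have E3_9 : g3 (m + 9) = g3 m := by rw [show m + 9 = (m + 6) + 3 by omega, g3_add]; rw [E3_6]
    have E3_10 : g3 (m + 10) = g3 (m + 1) := by rw [show m + 10 = (m + 7) + 3 by omega, g3_add]; rw [E3_7]
    have E3_11 : g3 (m + 11) = g3 (m + 2) := by rw [show m + 11 = (m + 8) + 3 by omega, g3_add]; rw [E3_8]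
    have E3_12 : g3 (m + 12) = g3 m := by rw [show m + 12 = (m + 9) + 3 by omega, g3_add]; rw [E3_9]
    have E3_13 : g3 (m + 13) = g3 (m + 1) := by rw [show m + 13 = (m + 10) + 3 by omega, g3_add]; rw [E3_10]
    have E3_14 : g3 (m + 14) = g3 (m + 2) := by rw [show m + 14 = (m + 11) + 3 by omega, g3_add]; rw [E3_11]
    have E3_15 : g3 (m + 15) = g3 m := by rw [show m + 15 = (m + 12) + 3 by omega, g3_add]; rw [E3_12]
    have E5_5 : g5 (m + 5) = g5 m := by exact g5_add m
    have E5_6 : g5 (m + 6) = g5 (m + 1) := by rw [show m + 6 = (m + 1) + 5 by omega, g5_add]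
    have E5_7 : g5 (m + 7) = g5 (m + 2) := by rw [show m + 7 = (m + 2) + 5 by omega, g5_add]
    have E5_8 : g5 (m + 8) = g5 (m + 3) := by rw [show m + 8 = (m + 3) + 5 by omega, g5_add]
    have E5_9 : g5 (m + 9) = g5 (m + 4) := by rw [show m + 9 = (m + 4) + 5 by omega, g5_add]
    have E5_10 : g5 (m + 10) = g5 m := by rw [show m + 10 = (m + 5) + 5 by omega, g5_add]; rw [E5_5]
    have E5_11 : g5 (m + 11) = g5 (m + 1) := by rw [show m + 11 = (m + 6) + 5 by omega, g5_add]; rw [E5_6]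
    have E5_12 : g5 (m + 12) = g5 (m + 2) := by rw [show m + 12 = (m + 7) + 5 by omega, g5_add]; rw [E5_7]
    have E5_13 : g5 (m + 13) = g5 (m + 3) := by rw [show m + 13 = (m + 8) + 5 by omega, g5_add]; rw [E5_8]
    have E5_14 : g5 (m + 14) = g5 (m + 4) := by rw [show m + 14 = (m + 9) + 5 by omega, g5_add]; rw [E5_9]
    have E5_15 : g5 (m + 15) = g5 m := by rw [show m + 15 = (m + 10) + 5 by omega, g5_add]; rw [E5_10]
    have E4_2 : g4 (m + 2) = -g4 m := by exact g4_add m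
    have E4_3 : g4 (m + 3) = -g4 (m + 1) := by rw [show m + 3 = (m + 1) + 2 by omega, g4_add]; try ring
    have E4_4 : g4 (m + 4) = g4 m := by rw [show m + 4 = (m + 2) + 2 by omega, g4_add]; rw [E4_2]; try ring
    have E4_5 : g4 (m + 5) = g4 (m + 1) := by rw [show m + 5 = (m + 3) + 2 by omega, g4_add]; rw [E4_3]; try ring
    have E4_6 : g4 (m + 6) = -g4 m := by rw [show m + 6 = (m + 4) + 2 by omega, g4_add]; rw [E4_4]; try ring
    have E4_7 : g4 (m + 7) = -g4 (m + 1) := by rw [show m + 7 = (m + 5) + 2 by omega, g4_add]; rw [E4_5]; try ring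
    have E4_8 : g4 (m + 8) = g4 m := by rw [show m + 8 = (m + 6) + 2 by omega, g4_add]; rw [E4_6]; try ring
    have E4_9 : g4 (m + 9) = g4 (m + 1) := by rw [show m + 9 = (m + 7) + 2 by omega, g4_add]; rw [E4_7]; try ring
    have E4_10 : g4 (m + 10) = -g4 m := by rw [show m + 10 = (m + 8) + 2 by omega, g4_add]; rw [E4_8]; try ring
    have E4_11 : g4 (m + 11) = -g4 (m + 1) := by rw [show m + 11 = (m + 9) + 2 by omega, g4_add]; rw [E4_9]; try ring
    have E4_12 : g4 (m + 12) = g4 m := by rw [show m + 12 = (m + 10) + 2 by omega, g4_add]; rw [E4_10]; try ring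
    have E4_13 : g4 (m + 13) = g4 (m + 1) := by rw [show m + 13 = (m + 11) + 2 by omega, g4_add]; rw [E4_11]; try ring
    have E4_14 : g4 (m + 14) = -g4 m := by rw [show m + 14 = (m + 12) + 2 by omega, g4_add]; rw [E4_12]; try ring
    have E4_15 : g4 (m + 15) = -g4 (m + 1) := by rw [show m + 15 = (m + 13) + 2 by omega, g4_add]; rw [E4_13]; try ring
    have i0 := ih m (by omega)
    have i1 := ih (m + 1) (by omega)
    have i2 := ih (m + 2) (by omega)
    have i3 := ih (m + 3) (by omega)
    have i4 := ih (m + 4) (by omega)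
    have i5 := ih (m + 5) (by omega)
    have i6 := ih (m + 6) (by omega)
    have i7 := ih (m + 7) (by omega)
    have i8 := ih (m + 8) (by omega)
    have i9 := ih (m + 9) (by omega)
    have i10 := ih (m + 10) (by omega)
    have i11 := ih (m + 11) (by omega)
    have i12 := ih (m + 12) (by omega)
    have i13 := ih (m + 13) (by omega)
    have i14 := ih (m + 14) (by omega)
    simp only [RHSF] at i0 i1 i2 i3 i4 i5 i6 i7 i8 i9 i10 i11 i12 i13 i14 ⊢
    push_cast at i0 i1 i2 i3 i4 i5 i6 i7 i8 i9 i10 i11 i12 i13 i14 ⊢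
    simp only [E3_3, E3_4, E3_5, E3_6, E3_7, E3_8, E3_9, E3_10, E3_11, E3_12, E3_13, E3_14, E3_15, E5_5, E5_6, E5_7, E5_8, E5_9, E5_10, E5_11, E5_12, E5_13, E5_14, E5_15, E4_2, E4_3, E4_4, E4_5, E4_6, E4_7, E4_8, E4_9, E4_10, E4_11, E4_12, E4_13, E4_14, E4_15] at i0 i1 i2 i3 i4 i5 i6 i7 i8 i9 i10 i11 i12 i13 i14 ⊢
    have hr := W5_rec ((m:ℤ) + 15)
    rw [if_neg (by omega)] at hr
    rw [show (m:ℤ) + 15 - 1 = (m:ℤ) + 14 by ring, show (m:ℤ) + 15 - 2 = (m:ℤ) + 13 by ring, show (m:ℤ) + 15 - 5 = (m:ℤ) + 10 by ring, show (m:ℤ) + 15 - 6 = (m:ℤ) + 9 by ring, show (m:ℤ) + 15 - 7 = (m:ℤ) + 8 by ring, show (m:ℤ) + 15 - 8 = (m:ℤ) + 7 by ring, show (m:ℤ) + 15 - 9 = (m:ℤ) + 6 by ring, show (m:ℤ) + 15 - 10 = (m:ℤ) + 5 by ring, show (m:ℤ) + 15 - 13 = (m:ℤ) + 2 by ring, show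 (m:ℤ) + 15 - 14 = (m:ℤ) + 1 by ring, show (m:ℤ) + 15 - 15 = (m:ℤ) by ring] at hr
    linear_combination (-86400 : ℤ) * hr + i0 + (-1) * i1 + (-1) * i2 + i5 + i6 + i7 + (-1) * i8 + (-1) * i9 + (-1) * i10 + i13 + i14

lemma T2 (s : ℕ) : Real.cos (Real.pi * s) = (-1 : ℝ)^s := by
  induction s with
  | zero => simp
  | succ n ihn =>
    rw [show Real.pi * (n+1 : ℕ) = Real.pi * n + Real.pi by push_cast; ring,
      Real.cos_add_pi, ihn, pow_succ]
    ring_nf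
    try norm_num

lemma T3 (s : ℕ) : Real.cos (2 * Real.pi * s / 3) = if s % 3 = 0 then 1 else -(1/2) := by
  obtain ⟨q, r, hr, rfl⟩ : ∃ q r, r < 3 ∧ s = 3*q + r := ⟨s/3, s%3, by omega, by omega⟩
  rw [show (2 * Real.pi * (3*q+r : ℕ) / 3 : ℝ) = 2 * Real.pi * r / 3 + (q:ℤ) * (2*Real.pi) by
    push_cast; ring, Real.cos_add_int_mul_two_pi,
    show (3*q+r) % 3 = r % 3 by omega]
  interval_cases r
  · norm_num
  · rw [show (2 * Real.pi * (1:ℕ) / 3 : ℝ) = Real.pi - Real.pi/3 by push_cast; ring,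
      Real.cos_pi_sub, Real.cos_pi_div_three]
    try norm_num
  · rw [show (2 * Real.pi * (2:ℕ) / 3 : ℝ) = 2*Real.pi - 2*Real.pi/3 by push_cast; ring,
      Real.cos_two_pi_sub,
      show (2*Real.pi/3 : ℝ) = Real.pi - Real.pi/3 by ring,
      Real.cos_pi_sub, Real.cos_pi_div_three]
    try norm_num

lemma T4 (s : ℕ) : Real.cos (Real.pi * s / 2) + Real.sin (Real.pi * s / 2)
    = if s % 4 ≤ 1 then 1 else -1 := by
  obtain ⟨q, r, hr, rfl⟩ : ∃ q r, r < 4 ∧ s = 4*q + r := ⟨s/4, s%4, by omega, by omega⟩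
  rw [show (Real.pi * (4*q+r : ℕ) / 2 : ℝ) = Real.pi * r / 2 + (q:ℤ) * (2*Real.pi) by
    push_cast; ring, Real.cos_add_int_mul_two_pi, Real.sin_add_int_mul_two_pi,
    show (4*q+r) % 4 = r % 4 by omega]
  interval_cases r
  · norm_num
  · rw [show (Real.pi * (1:ℕ) / 2 : ℝ) = Real.pi/2 by push_cast; ring,
      Real.cos_pi_div_two, Real.sin_pi_div_two]
    try norm_num
  · rw [show (Real.pi * (2:ℕ) / 2 : ℝ) = Real.pi by push_cast; ring,
      Real.cos_pi, Real.sin_pi]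
    try norm_num
  · rw [show (Real.pi * (3:ℕ) / 2 : ℝ) = 2*Real.pi - Real.pi/2 by push_cast; ring,
      Real.cos_two_pi_sub, Real.sin_two_pi_sub,
      Real.cos_pi_div_two, Real.sin_pi_div_two]
    try norm_num

lemma cos2pi5 : Real.cos (2*Real.pi/5) = (Real.sqrt 5 - 1)/4 := by
  have h := Real.cos_two_mul (Real.pi/5)
  rw [Real.cos_pi_div_five] at h
  rw [show (2*Real.pi/5 : ℝ) = 2*(Real.pi/5) by ring, h]
  have h5 : Real.sqrt 5 ^ 2 = 5 := Real.sq_sqrt (by norm_num)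
  nlinarith [h5]

lemma cos4pi5 : Real.cos (4*Real.pi/5) = -((1 + Real.sqrt 5)/4) := by
  rw [show (4*Real.pi/5 : ℝ) = Real.pi - Real.pi/5 by ring, Real.cos_pi_sub,
    Real.cos_pi_div_five]

lemma T5 (s : ℕ) : Real.cos (2 * Real.pi * s / 5) + Real.cos (4 * Real.pi * s / 5)
    = if s % 5 = 0 then 2 else -(1/2) := by
  obtain ⟨q, r, hr, rfl⟩ : ∃ q r, r < 5 ∧ s = 5*q + r := ⟨s/5, s%5, by omega, by omega⟩
  rw [show (2 * Real.pi * (5*q+r : ℕ) / 5 : ℝ) = 2 * Real.pi * r / 5 + (q:ℤ) * (2*Real.pi) by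
    push_cast; ring,
    show (4 * Real.pi * (5*q+r : ℕ) / 5 : ℝ) = 4 * Real.pi * r / 5 + (2*q:ℤ) * (2*Real.pi) by
    push_cast; ring, Real.cos_add_int_mul_two_pi, Real.cos_add_int_mul_two_pi,
    show (5*q+r) % 5 = r % 5 by omega]
  interval_cases r
  · norm_num
  · rw [show (2 * Real.pi * (1:ℕ) / 5 : ℝ) = 2*Real.pi/5 by push_cast; ring,
      show (4 * Real.pi * (1:ℕ) / 5 : ℝ) = 4*Real.pi/5 by push_cast; ring,
      cos2pi5, cos4pi5]
    ring_nf
    try norm_num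
  · rw [show (2 * Real.pi * (2:ℕ) / 5 : ℝ) = 4*Real.pi/5 by push_cast; ring,
      show (4 * Real.pi * (2:ℕ) / 5 : ℝ) = 2*Real.pi - 2*Real.pi/5 by push_cast; ring,
      Real.cos_two_pi_sub, cos2pi5, cos4pi5]
    ring_nf
    try norm_num
  · rw [show (2 * Real.pi * (3:ℕ) / 5 : ℝ) = Real.pi/5 + Real.pi by push_cast; ring,
      show (4 * Real.pi * (3:ℕ) / 5 : ℝ) = 2*Real.pi/5 + 2*Real.pi by push_cast; ring,
      Real.cos_add_pi, Real.cos_add_two_pi, cos2pi5, Real.cos_pi_div_five]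
    ring_nf
    try norm_num
  · rw [show (2 * Real.pi * (4:ℕ) / 5 : ℝ) = 2*Real.pi - 2*Real.pi/5 by push_cast; ring,
      Real.cos_two_pi_sub, cos2pi5,
      show (4 * Real.pi * (4:ℕ) / 5 : ℝ) = (Real.pi/5 + Real.pi) + (1:ℤ)*(2*Real.pi) by
        push_cast; ring,
      Real.cos_add_int_mul_two_pi, Real.cos_add_pi, Real.cos_pi_div_five]
    ring_nf
    try norm_num

/-- explicit quasipolynomial expression for `W_5(s)`. -/
theorem W5_explicit (s : ℕ) :
    (Wm 5 (s : ℤ) : ℝ) =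
      ((s : ℝ) ^ 4 + 30 * (s : ℝ) ^ 3 + 310 * (s : ℝ) ^ 2 + 1275 * (s : ℝ) + 1687) / 2880
        + 41 / 86400
        + ((2 * (s : ℝ) + 15) / 128) * Real.cos (Real.pi * s)
        + (2 / 27) * Real.cos (2 * Real.pi * s / 3)
        + (1 / 16) * (Real.cos (Real.pi * s / 2) + Real.sin (Real.pi * s / 2))
        + (2 / 25) * (Real.cos (2 * Real.pi * s / 5) + Real.cos (4 * Real.pi * s / 5)) := by
  have hL : Wm 5 (s : ℤ) = W (s:ℤ) [1,2,3,4,5] := rfl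
  rw [hL, T2 s, T3 s, T4 s, T5 s]
  have hk := key s
  have hk' : (86400:ℝ) * ((W (s:ℤ) [1,2,3,4,5] : ℕ) : ℝ) = ((RHSF s : ℤ) : ℝ) := by
    exact_mod_cast congrArg (fun z : ℤ => (z : ℝ)) hk
  by_cases h3 : s % 3 = 0 <;> by_cases h4 : s % 4 ≤ 1 <;> by_cases h5 : s % 5 = 0 <;>
    all_goals (
      simp only [RHSF, g3, g4, g5] at hk'
      simp [h3, h4, h5] at hk' ⊢
      push_cast at hk'
      linear_combination hk' / 86400)
end
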